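/- Let n be a positive integer with gcd(l-2, n) = 1, where l = 2^v + 1, v ≥ 1. If z_1, z_2 are distinct n-th roots of unity in an extension field of F_2, then (z_1 + z_2)^l + z_1^l + z_2^l ≠ 0. -/

import Mathlib

theorem stmt_3 (K : Type*) [Field K] [CharP K 2] (n v : ℕ) (hn : 0 < n) (hodd : Odd n)
    (hv : 1 ≤ v) (hgcd : Nat.gcd (2 ^ v - 1) n = 1)
    (z₁ z₂ : K) (hne : z₁ ≠ z₂) (hz₁ : z₁ ^ n = 1) (hz₂ : z₂ ^ n = 1) :
    (z₁ + z₂) ^ (2 ^ v + 1) + z₁ ^ (2 ^ v + 1) + z₂ ^ (2 ^ v + 1) ≠ 0 := by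
  have hz₁0 : z₁ ≠ 0 := fun h => by simp [h, zero_pow hn.ne'] at hz₁
  have hz₂0 : z₂ ≠ 0 := fun h => by simp [h, zero_pow hn.ne'] at hz₂
  have h2 : (2 : K) = 0 := by exact_mod_cast CharP.cast_eq_zero K 2
  intro h
  have hq : (z₁ + z₂) ^ 2 ^ v = z₁ ^ 2 ^ v + z₂ ^ 2 ^ v := add_pow_char_pow z₁ z₂ 2 v
  have expand : (z₁ + z₂) ^ (2 ^ v + 1) + z₁ ^ (2 ^ v + 1) + z₂ ^ (2 ^ v + 1)
      = z₁ ^ 2 ^ v * z₂ + z₂ ^ 2 ^ v * z₁ := by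
    rw [pow_succ, pow_succ, pow_succ, hq]
    ring_nf
    linear_combination (z₁ ^ 2 ^ v * z₁ + z₂ ^ 2 ^ v * z₂) * h2
  rw [expand] at h
  have heq : z₁ ^ 2 ^ v * z₂ = z₂ ^ 2 ^ v * z₁ := by
    linear_combination h - (z₂ ^ 2 ^ v * z₁) * h2
  -- deduce z₁ ^ (2^v - 1) = z₂ ^ (2^v - 1)
  have hsplit : 2 ^ v = (2 ^ v - 1) + 1 := (Nat.succ_pred_eq_of_pos (Nat.two_pow_pos v)).symm
  rw [hsplit, pow_succ, pow_succ] at heq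
  have hkey : z₁ ^ (2 ^ v - 1) = z₂ ^ (2 ^ v - 1) := by
    have h' : z₁ ^ (2 ^ v - 1) * (z₁ * z₂) = z₂ ^ (2 ^ v - 1) * (z₁ * z₂) := by
      ring_nf; ring_nf at heq; linear_combination heq
    exact mul_right_cancel₀ (mul_ne_zero hz₁0 hz₂0) h'
  set w : K := z₁ * z₂⁻¹ with hw
  have hwn : w ^ n = 1 := by
    rw [hw, mul_pow, inv_pow, hz₁, hz₂]; simp
  have hwk : w ^ (2 ^ v - 1) = 1 := by
    rw [hw, mul_pow, inv_pow, hkey]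
    field_simp
  have hd1 : orderOf w ∣ 2 ^ v - 1 := orderOf_dvd_of_pow_eq_one hwk
  have hd2 : orderOf w ∣ n := orderOf_dvd_of_pow_eq_one hwn
  have : orderOf w ∣ 1 := hgcd ▸ Nat.dvd_gcd hd1 hd2
  have hw1 : w = 1 := orderOf_eq_one_iff.mp (Nat.dvd_one.mp this)
  apply hne
  have := hw1
  rw [hw] at this
  field_simp at this
  exact this
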